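/- Let 0 = ξ₁ < η₁ < ⋯ < ξₙ < ηₙ < 2π and let χ be the characteristic function of ⋃ᵣ[ξᵣ,ηᵣ], with Hardy function h(χ)(z) = ∑_{k≥1} cₖ(χ) zᵏ on the open unit disk. Then for all |z| < 1, exp(−2πi · h(χ)(z)) = ∏_{r=1}^{n} (1 − z e^{iηᵣ})/(1 − z e^{iξᵣ}); in particular exp(−2πi·h(χ)) extends to a rational function whose poles lie on the unit circle at the points e^{−iξᵣ}. -/

import Mathlib

open Real MeasureTheory Complex

/-- Exponentiating the Hardy function of a crisp subset of order `n` yields a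
rational function: if `h(χ)(z) = ∑_{k≥1} cₖ(χ) zᵏ` on the open unit disk, then
`exp(−2πi·h(χ)(z)) = ∏ᵣ (1 − z e^{iηᵣ})/(1 − z e^{iξᵣ})`; in particular the
denominators vanish exactly on the unit circle, at the points `e^{−iξᵣ}`. -/
theorem crisp_exp_hardy (n : ℕ) (ξ η : Fin n → ℝ)
    (h0 : ∀ h : 0 < n, ξ ⟨0, h⟩ = 0)
    (hlt : ∀ r : Fin n, ξ r < η r)
    (hchain : ∀ r : Fin n, ∀ h : r.val + 1 < n, η r < ξ ⟨r.val + 1, h⟩)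
    (htop : ∀ r : Fin n, η r < 2*π)
    (c : ℕ → ℂ)
    (hc : ∀ k : ℕ, 0 < k → c k = (1/(2*π*k*Complex.I)) *
      ∑ r : Fin n, (Complex.exp (Complex.I * k * η r) - Complex.exp (Complex.I * k * ξ r)))
    (hχ : ℂ → ℂ)
    (hHardy : ∀ z : ℂ, ‖z‖ < 1 → HasSum (fun k : ℕ => c (k+1) * z ^ (k+1)) (hχ z)) :
    (∀ z : ℂ, ‖z‖ < 1 →
      Complex.exp (-(2*π*Complex.I) * hχ z) =
        ∏ r : Fin n, (1 - z * Complex.exp (Complex.I * η r)) /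
          (1 - z * Complex.exp (Complex.I * ξ r))) ∧
    ∀ r : Fin n, ‖Complex.exp (-Complex.I * ξ r)‖ = 1 ∧
      1 - Complex.exp (-Complex.I * ξ r) * Complex.exp (Complex.I * ξ r) = 0 := by
  constructor
  · intro z hz
    have h2πI : (2*(π:ℂ)*Complex.I) ≠ 0 := by
      simp [Real.pi_ne_zero, Complex.I_ne_zero, Complex.ofReal_ne_zero]
    -- norms
    have hw : ∀ θ : ℝ, ‖z * Complex.exp (Complex.I * θ)‖ < 1 := by
      intro θ
      have : ‖Complex.exp (Complex.I * θ)‖ = 1 := by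
        simp [Complex.norm_exp]
      simp [map_mul, this]
      simpa using hz
    have hne : ∀ θ : ℝ, (1 : ℂ) - z * Complex.exp (Complex.I * θ) ≠ 0 := by
      intro θ h
      rw [sub_eq_zero] at h
      have := hw θ
      rw [← h] at this
      simp at this
    -- log series
    have L : ∀ θ : ℝ, HasSum (fun k : ℕ => (z * Complex.exp (Complex.I * θ))^(k+1) / ((k:ℂ)+1))
        (-Complex.log (1 - z * Complex.exp (Complex.I * θ))) := by
      intro θ
      have h1 := Complex.hasSum_taylorSeries_neg_log (hw θ)
      have h2 := (hasSum_nat_add_iff' (f := fun k : ℕ =>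
        (z * Complex.exp (Complex.I * θ))^k / (k:ℂ)) 1).mpr h1
      simpa using h2
    -- the big HasSum
    have hsum : HasSum (fun k : ℕ => c (k+1) * z ^ (k+1))
        ((1/(2*(π:ℂ)*Complex.I)) * ∑ r : Fin n,
          (-Complex.log (1 - z * Complex.exp (Complex.I * η r)) -
            -Complex.log (1 - z * Complex.exp (Complex.I * ξ r)))) := by
      have H := (hasSum_sum (s := (Finset.univ : Finset (Fin n)))
        (f := fun (r : Fin n) (k : ℕ) =>
          (z * Complex.exp (Complex.I * η r))^(k+1) / ((k:ℂ)+1) -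
          (z * Complex.exp (Complex.I * ξ r))^(k+1) / ((k:ℂ)+1))
        (a := fun r : Fin n =>
          -Complex.log (1 - z * Complex.exp (Complex.I * η r)) -
            -Complex.log (1 - z * Complex.exp (Complex.I * ξ r)))
        (fun r _ => (L (η r)).sub (L (ξ r)))).mul_left (1/(2*(π:ℂ)*Complex.I))
      have hfun : (fun k : ℕ => c (k+1) * z ^ (k+1)) =
          (fun k : ℕ => (1/(2*(π:ℂ)*Complex.I)) * ∑ r : Fin n,
            ((z * Complex.exp (Complex.I * η r))^(k+1) / ((k:ℂ)+1) -
             (z * Complex.exp (Complex.I * ξ r))^(k+1) / ((k:ℂ)+1))) := by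
        funext k
        rw [hc (k+1) (Nat.succ_pos k)]
        have hk : ((k:ℂ)+1) ≠ 0 := Nat.cast_add_one_ne_zero k
        have hπ : ((π:ℂ)) ≠ 0 := Complex.ofReal_ne_zero.mpr Real.pi_ne_zero
        have hexp : ∀ θ : ℝ, Complex.exp (Complex.I * ((k+1 : ℕ):ℂ) * θ) =
            (Complex.exp (Complex.I * θ))^(k+1) := by
          intro θ
          rw [← Complex.exp_nat_mul]
          congr 1
          push_cast
          ring
        simp only [Finset.mul_sum, Finset.sum_mul]
        refine Finset.sum_congr rfl fun r _ => ?_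
        rw [hexp, hexp, mul_pow, mul_pow]
        push_cast
        field_simp
      rw [hfun]
      exact H
    have hval := (hHardy z hz).unique hsum
    rw [hval]
    have e1 : -(2*(π:ℂ)*Complex.I) * ((1/(2*(π:ℂ)*Complex.I)) * ∑ r : Fin n,
          (-Complex.log (1 - z * Complex.exp (Complex.I * η r)) -
            -Complex.log (1 - z * Complex.exp (Complex.I * ξ r)))) =
        ∑ r : Fin n, (Complex.log (1 - z * Complex.exp (Complex.I * η r)) -
            Complex.log (1 - z * Complex.exp (Complex.I * ξ r))) := by
      rw [← mul_assoc, neg_mul, mul_one_div, div_self h2πI, neg_one_mul,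
        ← Finset.sum_neg_distrib]
      exact Finset.sum_congr rfl fun r _ => by ring
    rw [e1, Complex.exp_sum]
    refine Finset.prod_congr rfl fun r _ => ?_
    rw [Complex.exp_sub, Complex.exp_log (hne (η r)), Complex.exp_log (hne (ξ r))]
  · intro r
    constructor
    · simp [Complex.norm_exp]
    · rw [← Complex.exp_add, show -Complex.I * (ξ r : ℂ) + Complex.I * (ξ r : ℂ) = 0 by ring,
        Complex.exp_zero, sub_self]
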